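/- The number of indecomposable permutations with exactly k inversions avoiding both 123 and 132 equals the number of 'almost triangular' partitions of k, i.e., sequences ρ₁ ≤ ρ₂ ≤ … ≤ ρ_r with each ρ_i ∈ {i−1, i} summing to k, not all equal to i−1 (in particular with ρ_r = r allowed to determine r uniquely). This count is the binomial coefficient C(r, k − r(r−1)/2), where r is the unique integer with r(r−1)/2 < k ≤ r(r+1)/2 (and the count is 1 for k = 0). -/

import Mathlib

def inversions {n : ℕ} (π : Equiv.Perm (Fin n)) : ℕ :=
  (Finset.univ.filter fun p : Fin n × Fin n => p.1 < p.2 ∧ π p.2 < π p.1).card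

def Decomposable {n : ℕ} (π : Equiv.Perm (Fin n)) : Prop :=
  ∃ j : ℕ, 0 < j ∧ j < n ∧ ∀ i : Fin n, (i : ℕ) < j → (π i : ℕ) < j

def Indecomposable {n : ℕ} (π : Equiv.Perm (Fin n)) : Prop :=
  0 < n ∧ ¬ Decomposable π

def invTable {n : ℕ} (π : Equiv.Perm (Fin n)) (i : Fin n) : ℕ :=
  (Finset.univ.filter fun j : Fin n => i < j ∧ π j < π i).card

def Avoids123 {n : ℕ} (π : Equiv.Perm (Fin n)) : Prop :=
  ¬ ∃ i j k : Fin n, i < j ∧ j < k ∧ π i < π j ∧ π j < π k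

def Avoids132 {n : ℕ} (π : Equiv.Perm (Fin n)) : Prop :=
  ¬ ∃ i j k : Fin n, i < j ∧ j < k ∧ π i < π k ∧ π k < π j

def Avoids213 {n : ℕ} (π : Equiv.Perm (Fin n)) : Prop :=
  ¬ ∃ i j k : Fin n, i < j ∧ j < k ∧ π j < π i ∧ π i < π k

def Avoids231 {n : ℕ} (π : Equiv.Perm (Fin n)) : Prop :=
  ¬ ∃ i j k : Fin n, i < j ∧ j < k ∧ π k < π i ∧ π i < π j

def Avoids312 {n : ℕ} (π : Equiv.Perm (Fin n)) : Prop :=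
  ¬ ∃ i j k : Fin n, i < j ∧ j < k ∧ π j < π k ∧ π k < π i

def Avoids321 {n : ℕ} (π : Equiv.Perm (Fin n)) : Prop :=
  ¬ ∃ i j k : Fin n, i < j ∧ j < k ∧ π k < π j ∧ π j < π i

def LTRMax {n : ℕ} (π : Equiv.Perm (Fin n)) (k : Fin n) : Prop :=
  ∀ i : Fin n, i < k → π i < π k

def revComp {n : ℕ} (π : Equiv.Perm (Fin n)) : Equiv.Perm (Fin n) :=
  Fin.revPerm * π * Fin.revPerm

/-- Almost triangular partitions of `k`, written as a weakly increasing list whose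
0-indexed `p`-th entry is `p` or `p + 1` (1-indexed: `ρᵢ ∈ {i-1, i}`), summing to
`k`, and (when nonempty) not all entries equal to `p` (1-indexed `i - 1`). -/
def AlmostTriangular (k : ℕ) (l : List ℕ) : Prop :=
  (∀ p, p < l.length → l.getD p 0 = p ∨ l.getD p 0 = p + 1) ∧
  (l ≠ [] → ∃ p, p < l.length ∧ l.getD p 0 = p + 1) ∧
  l.sum = k

/-- The number of indecomposable permutations with exactly `k` inversions avoiding
both 123 and 132. -/
noncomputable def I123132 (k : ℕ) : ℕ :=
  Nat.card {p : Σ n : ℕ, Equiv.Perm (Fin n) //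
    Indecomposable p.2 ∧ inversions p.2 = k ∧ Avoids123 p.2 ∧ Avoids132 p.2}

open Finset Equiv

/-! ### Basic invTable facts -/

lemma invTable_le {n : ℕ} (π : Perm (Fin n)) (i : Fin n) :
    invTable π i ≤ n - 1 - i.val := by
  rw [← Fin.card_Ioi i]
  apply Finset.card_le_card
  intro j hj
  simp only [Finset.mem_filter, Finset.mem_Ioi] at *
  exact hj.2.1

lemma invTable_last {n : ℕ} (π : Perm (Fin n)) (i : Fin n) (h : i.val = n - 1) :
    invTable π i = 0 := by
  have := invTable_le π i
  omega

/-- counting partition at `i`: smaller-later plus bigger-later is everything later -/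
lemma invTable_add_bigger {n : ℕ} (π : Perm (Fin n)) (i : Fin n) :
    invTable π i + (Finset.univ.filter fun j : Fin n => i < j ∧ π i < π j).card
      = n - 1 - i.val := by
  rw [← Fin.card_Ioi i]
  have h1 : (Finset.univ.filter fun j : Fin n => i < j ∧ π j < π i)
      = (Finset.Ioi i).filter (fun j => π j < π i) := by
    ext j; simp [Finset.mem_Ioi, and_comm]
  have h2 : (Finset.univ.filter fun j : Fin n => i < j ∧ π i < π j)
      = (Finset.Ioi i).filter (fun j => ¬ (π j < π i)) := by
    ext j
    simp only [Finset.mem_filter, Finset.mem_Ioi, Finset.mem_univ, true_and, not_lt]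
    constructor
    · rintro ⟨h, h'⟩; exact ⟨h, le_of_lt h'⟩
    · rintro ⟨h, h'⟩
      refine ⟨h, lt_of_le_of_ne h' ?_⟩
      intro hc
      exact absurd (π.injective hc) (by intro e; subst e; exact lt_irrefl _ h)
  rw [invTable, h1, h2]
  exact Finset.card_filter_add_card_filter_not _

lemma invTable_lt {n : ℕ} (π : Perm (Fin n)) (i : Fin n) :
    invTable π i + i.val < n := by
  have := invTable_le π i
  have := i.isLt
  omega

/-! ### Insertion and the Lehmer code -/

noncomputable def insertPerm {n : ℕ} (p : Fin (n+1)) (σ : Perm (Fin n)) : Perm (Fin (n+1)) :=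
  Equiv.ofBijective (Fin.cases p (fun x => p.succAbove (σ x)))
    (by
      rw [Finite.injective_iff_bijective.symm]
      intro a b hab
      induction a using Fin.cases with
      | zero =>
        induction b using Fin.cases with
        | zero => rfl
        | succ y => exact absurd hab.symm (Fin.succAbove_ne p (σ y))
      | succ x =>
        induction b using Fin.cases with
        | zero => exact absurd hab (Fin.succAbove_ne p (σ x))
        | succ y =>
          simp only [Fin.cases_succ] at hab
          have := σ.injective (Fin.succAbove_right_injective hab)
          rw [this])

@[simp] lemma insertPerm_zero {n : ℕ} (p : Fin (n+1)) (σ : Perm (Fin n)) :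
    insertPerm p σ 0 = p := rfl

@[simp] lemma insertPerm_succ {n : ℕ} (p : Fin (n+1)) (σ : Perm (Fin n)) (x : Fin n) :
    insertPerm p σ x.succ = p.succAbove (σ x) := rfl

lemma exists_insertPerm {n : ℕ} (π : Perm (Fin (n+1))) :
    ∃ p σ, π = insertPerm p σ := by
  have hinj : Function.Injective
      (fun q : Fin (n+1) × Perm (Fin n) => insertPerm q.1 q.2) := by
    rintro ⟨p, σ⟩ ⟨p', σ'⟩ h
    simp only [Prod.mk.injEq]
    have hp : p = p' := by
      have := congrArg (fun π : Perm (Fin (n+1)) => π 0) h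
      simpa using this
    refine ⟨hp, ?_⟩
    subst hp
    ext x
    have := congrArg (fun π : Perm (Fin (n+1)) => π x.succ) h
    simp only [insertPerm_succ] at this
    exact congrArg Fin.val (p.succAbove_right_injective this)
  have hcard : Fintype.card (Fin (n+1) × Perm (Fin n)) = Fintype.card (Perm (Fin (n+1))) := by
    simp [Fintype.card_perm, Nat.factorial_succ]
  have hbij := (Fintype.bijective_iff_injective_and_card _).2 ⟨hinj, hcard⟩
  obtain ⟨⟨p, σ⟩, hq⟩ := hbij.2 π
  exact ⟨p, σ, hq.symm⟩

lemma card_lt_fin {n : ℕ} (p : Fin (n+1)) :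
    ((Finset.univ : Finset (Fin n)).filter fun y => y.castSucc < p).card = p.val := by
  rcases Nat.lt_or_ge p.val n with h | h
  · have : ((Finset.univ : Finset (Fin n)).filter fun y => y.castSucc < p)
        = Finset.Iio ⟨p.val, h⟩ := by
      ext y
      simp [Fin.lt_def, Fin.castSucc, Fin.lt_iff_val_lt_val]
    rw [this, Fin.card_Iio]
  · have hp : p.val = n := by omega
    have : ((Finset.univ : Finset (Fin n)).filter fun y => y.castSucc < p)
        = Finset.univ := by
      ext y
      simp only [Finset.mem_filter, Finset.mem_univ, true_and, iff_true]
      rw [Fin.lt_iff_val_lt_val]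
      simpa [hp] using y.isLt
    rw [this, Finset.card_univ, Fintype.card_fin, hp]

lemma invTable_insertPerm_zero {n : ℕ} (p : Fin (n+1)) (σ : Perm (Fin n)) :
    invTable (insertPerm p σ) 0 = p.val := by
  rw [invTable, Finset.card_filter, Fin.sum_univ_succ]
  simp only [insertPerm_zero, insertPerm_succ, lt_irrefl, false_and, if_false, Fin.succ_pos,
    true_and, zero_add]
  have h1 : ∀ x : Fin n, (if p.succAbove (σ x) < p then 1 else 0)
      = (fun y : Fin n => if y.castSucc < p then (1:ℕ) else 0) (σ x) := by
    intro x
    simp [Fin.succAbove_lt_iff_castSucc_lt]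
  rw [Finset.sum_congr rfl (fun x _ => h1 x), Equiv.sum_comp σ
    (fun y : Fin n => if y.castSucc < p then (1:ℕ) else 0), ← Finset.card_filter, card_lt_fin]

lemma invTable_insertPerm_succ {n : ℕ} (p : Fin (n+1)) (σ : Perm (Fin n)) (x : Fin n) :
    invTable (insertPerm p σ) x.succ = invTable σ x := by
  rw [invTable, invTable, Finset.card_filter, Finset.card_filter, Fin.sum_univ_succ]
  have h0 : ¬ ((x.succ : Fin (n+1)) < 0) := by simp
  simp only [h0, false_and, if_false, zero_add, insertPerm_succ]
  apply Finset.sum_congr rfl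
  intro z _
  congr 1
  simp only [Fin.succ_lt_succ_iff, Fin.succAbove_lt_succAbove_iff, eq_iff_iff]

lemma invTable_injective {n : ℕ} (π π' : Perm (Fin n))
    (h : ∀ i, invTable π i = invTable π' i) : π = π' := by
  induction n with
  | zero => exact Subsingleton.elim _ _
  | succ m ih =>
    obtain ⟨p, σ, rfl⟩ := exists_insertPerm π
    obtain ⟨p', σ', rfl⟩ := exists_insertPerm π'
    have hp : p = p' := by
      have := h 0
      rw [invTable_insertPerm_zero, invTable_insertPerm_zero] at this
      exact Fin.val_injective this
    subst hp
    have hσ : σ = σ' := by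
      apply ih
      intro x
      have := h x.succ
      rwa [invTable_insertPerm_succ, invTable_insertPerm_succ] at this
    rw [hσ]

lemma prod_fin_sub (n : ℕ) : ∏ i : Fin n, (n - i.val) = n.factorial := by
  rw [Fin.prod_univ_eq_prod_range (fun i => n - i)]
  have h1 : ∏ j ∈ Finset.range n, (n - j) = ∏ j ∈ Finset.range n, (n - 1 - j + 1) := by
    apply Finset.prod_congr rfl
    intro j hj
    rw [Finset.mem_range] at hj
    omega
  rw [h1, Finset.prod_range_reflect (fun j => j + 1) n,
    Finset.prod_range_add_one_eq_factorial]

lemma invTable_surjective {n : ℕ} (c : ∀ i : Fin n, Fin (n - i.val)) :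
    ∃ π : Perm (Fin n), ∀ i, invTable π i = (c i).val := by
  have hinj : Function.Injective
      (fun π : Perm (Fin n) => fun i : Fin n =>
        (⟨invTable π i, by have := invTable_lt π i; have := i.isLt; omega⟩ : Fin (n - i.val))) := by
    intro π π' h
    apply invTable_injective
    intro i
    have := congrFun h i
    exact congrArg Fin.val this
  have hcard : Fintype.card (Perm (Fin n))
      = Fintype.card (∀ i : Fin n, Fin (n - i.val)) := by
    rw [Fintype.card_pi]
    simp only [Fintype.card_fin]
    rw [Fintype.card_perm, Fintype.card_fin, ← prod_fin_sub]
  have hbij := (Fintype.bijective_iff_injective_and_card _).2 ⟨hinj, hcard⟩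
  obtain ⟨π, hπ⟩ := hbij.2 c
  exact ⟨π, fun i => congrArg Fin.val (congrFun hπ i)⟩

/-! ### class characterization -/

lemma avoids_aux {n : ℕ} (π : Perm (Fin n)) (i j k : Fin n) (hij : i < j) (hjk : j < k)
    (h1 : π i < π j) (h2 : π i < π k) : ¬ (n ≤ invTable π i + i.val + 2) := by
  intro hn
  have hadd := invTable_add_bigger π i
  have hsub : ({j, k} : Finset (Fin n)) ⊆
      Finset.univ.filter fun m : Fin n => i < m ∧ π i < π m := by
    intro m hm
    simp only [Finset.mem_insert, Finset.mem_singleton] at hm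
    rcases hm with rfl | rfl
    · simp [hij, h1]
    · simp [hij.trans hjk, h2]
  have hcard2 : ({j, k} : Finset (Fin n)).card = 2 := by
    rw [Finset.card_insert_of_notMem (by simp [Fin.ne_of_lt hjk]), Finset.card_singleton]
  have := Finset.card_le_card hsub
  rw [hcard2] at this
  have hk := k.isLt
  have hik : i.val + 2 ≤ k.val := by
    have := hij.trans hjk
    have h1' : i.val < j.val := hij
    have h2' : j.val < k.val := hjk
    omega
  omega

lemma avoids_iff {n : ℕ} (π : Perm (Fin n)) :
    (Avoids123 π ∧ Avoids132 π) ↔ ∀ i : Fin n, n ≤ invTable π i + i.val + 2 := by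
  constructor
  · rintro ⟨h123, h132⟩ i
    by_contra hlt
    push_neg at hlt
    have hadd := invTable_add_bigger π i
    have hi := i.isLt
    have hbig : 1 < (Finset.univ.filter fun m : Fin n => i < m ∧ π i < π m).card := by
      omega
    obtain ⟨a, ha, b, hb, hab⟩ := Finset.one_lt_card.mp hbig
    simp only [Finset.mem_filter, Finset.mem_univ, true_and] at ha hb
    rcases lt_or_gt_of_ne hab with h | h
    · rcases lt_or_gt_of_ne (fun e : π a = π b => hab (π.injective e)) with hv | hv
      · exact h123 ⟨i, a, b, ha.1, h, ha.2, hv⟩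
      · exact h132 ⟨i, a, b, ha.1, h, hb.2, hv⟩
    · rcases lt_or_gt_of_ne (fun e : π b = π a => hab (π.injective e).symm) with hv | hv
      · exact h123 ⟨i, b, a, hb.1, h, hb.2, hv⟩
      · exact h132 ⟨i, b, a, hb.1, h, ha.2, hv⟩
  · rintro hav
    constructor
    · rintro ⟨i, j, k, hij, hjk, h1, h2⟩
      exact absurd (hav i) (avoids_aux π i j k hij hjk h1 (h1.trans h2))
    · rintro ⟨i, j, k, hij, hjk, h1, h2⟩
      exact absurd (hav i) (avoids_aux π i j k hij hjk (h1.trans h2) h1)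

lemma inversions_eq_sum {n : ℕ} (π : Perm (Fin n)) :
    inversions π = ∑ i, invTable π i := by
  rw [inversions, Finset.card_filter, Fintype.sum_prod_type]
  apply Finset.sum_congr rfl
  intro i _
  rw [invTable, Finset.card_filter]

lemma bump_invTable_eq {n : ℕ} (π : Perm (Fin n)) (i : Fin n) (h : (π i).val = n - 1) :
    invTable π i = n - 1 - i.val := by
  have : (Finset.univ.filter fun j : Fin n => i < j ∧ π j < π i) = Finset.Ioi i := by
    ext m
    simp only [Finset.mem_filter, Finset.mem_univ, true_and, Finset.mem_Ioi]
    constructor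
    · exact fun h => h.1
    · intro him
      refine ⟨him, ?_⟩
      have hne : π m ≠ π i := fun e => absurd (π.injective e) (Fin.ne_of_gt him)
      rw [Fin.lt_iff_val_lt_val]
      have := (π m).isLt
      have : (π m).val ≠ (π i).val := fun e => hne (Fin.val_injective e)
      omega
  rw [invTable, this, Fin.card_Ioi]

lemma decomp_iff {n : ℕ} (π : Perm (Fin n)) (hn : 2 ≤ n)
    (hav : ∀ i : Fin n, n ≤ invTable π i + i.val + 2) :
    Decomposable π ↔ ∀ i : Fin n, i.val + 1 < n → invTable π i + i.val + 2 ≤ n := by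
  constructor
  · rintro ⟨j, hj0, hjn, hmaps⟩
    have hout : ∀ m : Fin n, j ≤ m.val → j ≤ (π m).val := by
      set S := Finset.univ.filter (fun i : Fin n => i.val < j) with hS
      have himg : Finset.image π S = S := by
        apply Finset.eq_of_subset_of_card_le
        · intro m hm
          simp only [hS, Finset.mem_image, Finset.mem_filter, Finset.mem_univ, true_and] at hm ⊢
          obtain ⟨a, ha, rfl⟩ := hm
          exact hmaps a ha
        · rw [Finset.card_image_of_injective _ π.injective]
      intro m hm
      by_contra hc
      push_neg at hc
      have : π m ∈ S := by simp [hS, hc]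
      rw [← himg] at this
      simp only [Finset.mem_image] at this
      obtain ⟨a, haS, hae⟩ := this
      have : a = m := π.injective hae
      subst this
      simp only [hS, Finset.mem_filter, Finset.mem_univ, true_and] at haS
      omega
    have hj1 : j - 1 < n := by omega
    set i0 : Fin n := ⟨j - 1, hj1⟩ with hi0
    have hi0v : (i0 : ℕ) = j - 1 := rfl
    set j0 : Fin n := ⟨j, hjn⟩ with hj0'
    have hj0v : (j0 : ℕ) = j := rfl
    have hsub : Finset.Ici j0 ⊆
        Finset.univ.filter fun m : Fin n => i0 < m ∧ π i0 < π m := by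
      intro m hm
      rw [Finset.mem_Ici, Fin.le_iff_val_le_val, hj0v] at hm
      simp only [Finset.mem_filter, Finset.mem_univ, true_and]
      constructor
      · rw [Fin.lt_iff_val_lt_val, hi0v]; omega
      · have h1 : (π i0).val < j := hmaps i0 (by rw [hi0v]; omega)
        have h2 : j ≤ (π m).val := hout m hm
        rw [Fin.lt_iff_val_lt_val]; omega
    have hcard := Finset.card_le_card hsub
    rw [Fin.card_Ici, hj0v] at hcard
    have hadd := invTable_add_bigger π i0
    have havi := hav i0
    rw [hi0v] at hadd havi
    have hjn1 : j = n - 1 := by omega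
    subst hjn1
    set last : Fin n := ⟨n - 1, by omega⟩ with hlast'
    have hlastv : (last : ℕ) = n - 1 := rfl
    have hlast : (π last).val = n - 1 := by
      have h1 := hout last hlastv.ge
      have h2 := (π last).isLt
      omega
    intro i hi
    have hadd2 := invTable_add_bigger π i
    have hmem : last ∈ Finset.univ.filter fun m : Fin n => i < m ∧ π i < π m := by
      simp only [Finset.mem_filter, Finset.mem_univ, true_and]
      constructor
      · rw [Fin.lt_iff_val_lt_val, hlastv]; omega
      · have hne : i ≠ last := by
          intro e
          rw [e] at hi
          rw [hlastv] at hi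
          omega
        have hne2 : (π i).val ≠ (π last).val := by
          intro e
          exact hne (π.injective (Fin.val_injective e))
        have h1 := (π i).isLt
        rw [Fin.lt_iff_val_lt_val, hlast]
        omega
    have := Finset.card_pos.mpr ⟨_, hmem⟩
    omega
  · intro hnb
    refine ⟨n - 1, by omega, by omega, ?_⟩
    intro i hi
    by_contra hc
    push_neg at hc
    have hπi : (π i).val = n - 1 := by
      have := (π i).isLt
      omega
    have h1 := bump_invTable_eq π i hπi
    have h2 := hnb i (by omega)
    have := i.isLt
    omega

/-! ### list sums -/

lemma list_sum_getD (l : List ℕ) : l.sum = ∑ p : Fin l.length, l.getD p.val 0 := by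
  conv_lhs => rw [← List.ofFn_getElem (xs := l)]
  rw [List.sum_ofFn]
  apply Finset.sum_congr rfl
  intro p _
  rw [List.getD_eq_getElem _ _ p.isLt]

lemma gauss_fin (r : ℕ) : ∑ p : Fin r, p.val = r * (r - 1) / 2 := by
  rw [Fin.sum_univ_eq_sum_range (fun i => i), Finset.sum_range_id]

lemma sum_ite_mem_card {r : ℕ} (s : Finset (Fin r)) :
    ∑ p : Fin r, (if p ∈ s then (1:ℕ) else 0) = s.card := by
  rw [Finset.sum_ite_mem, Finset.univ_inter, Finset.card_eq_sum_ones]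

lemma tri_add (L : ℕ) : L * (L - 1) / 2 + L = L * (L + 1) / 2 := by
  cases L with
  | zero => rfl
  | succ m =>
    have h : (m+1) * (m+1+1) = (m+1) * (m+1-1) + 2 * (m+1) := by
      simp only [Nat.add_sub_cancel]
      ring
    rw [h, Nat.add_mul_div_left _ _ (by norm_num : (0:ℕ) < 2)]

lemma tri_lt_of_lt {r r' : ℕ} (h : r < r') : r * (r + 1) / 2 ≤ r' * (r' - 1) / 2 := by
  apply Nat.div_le_div_right
  calc r * (r + 1) ≤ (r' - 1) * r' := Nat.mul_le_mul (by omega) (by omega)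
  _ = r' * (r' - 1) := Nat.mul_comm _ _

lemma r_unique {k r r' : ℕ} (h1 : r * (r - 1) / 2 < k) (h2 : k ≤ r * (r + 1) / 2)
    (h1' : r' * (r' - 1) / 2 < k) (h2' : k ≤ r' * (r' + 1) / 2) : r = r' := by
  rcases Nat.lt_trichotomy r r' with h | h | h
  · have := tri_lt_of_lt h
    omega
  · exact h
  · have := tri_lt_of_lt h
    omega

lemma AT_sum_card {k : ℕ} {l : List ℕ} (h : AlmostTriangular k l) :
    k = l.length * (l.length - 1) / 2 +
        (Finset.univ.filter (fun p : Fin l.length => l.getD p.val 0 = p.val + 1)).card ∧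
      (Finset.univ.filter (fun p : Fin l.length => l.getD p.val 0 = p.val + 1)).card
        ≤ l.length := by
  obtain ⟨hent, _, hsum⟩ := h
  constructor
  · rw [← hsum, list_sum_getD l]
    have he : ∀ p : Fin l.length, l.getD p.val 0
        = p.val + (if p ∈ Finset.univ.filter
            (fun p : Fin l.length => l.getD p.val 0 = p.val + 1) then 1 else 0) := by
      intro p
      rcases hent p.val p.isLt with hp | hp
      · rw [if_neg]
        · omega
        · rw [Finset.mem_filter]
          rintro ⟨-, hc⟩
          omega
      · rw [if_pos]
        · exact hp
        · rw [Finset.mem_filter]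
          exact ⟨Finset.mem_univ _, hp⟩
    rw [Finset.sum_congr rfl (fun p _ => he p), Finset.sum_add_distrib, gauss_fin,
      sum_ite_mem_card]
  · have hsub := Finset.card_le_card (Finset.filter_subset
      (fun p : Fin l.length => l.getD p.val 0 = p.val + 1) Finset.univ)
    rw [Finset.card_univ, Fintype.card_fin] at hsub
    exact hsub

lemma AT_length_bounds {k : ℕ} {l : List ℕ} (h : AlmostTriangular k l) (hne : l ≠ []) :
    l.length * (l.length - 1) / 2 < k ∧ k ≤ l.length * (l.length + 1) / 2 := by
  obtain ⟨hk, hle⟩ := AT_sum_card h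
  obtain ⟨p, hp, hpe⟩ := h.2.1 hne
  have hpos : 0 < (Finset.univ.filter
      (fun p : Fin l.length => l.getD p.val 0 = p.val + 1)).card :=
    Finset.card_pos.mpr ⟨⟨p, hp⟩, Finset.mem_filter.mpr ⟨Finset.mem_univ _, hpe⟩⟩
  have := tri_add l.length
  omega

lemma AT_zero : {l : List ℕ | AlmostTriangular 0 l} = {([] : List ℕ)} := by
  ext l
  simp only [Set.mem_setOf_eq, Set.mem_singleton_iff]
  constructor
  · intro h
    by_contra hne
    obtain ⟨p, hp, hpe⟩ := h.2.1 hne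
    have h1 := list_sum_getD l
    rw [h.2.2] at h1
    have h2 := Finset.single_le_sum (f := fun q : Fin l.length => l.getD q.val 0)
      (fun _ _ => Nat.zero_le _) (Finset.mem_univ ⟨p, hp⟩)
    rw [← h1] at h2
    simp only at h2
    omega
  · rintro rfl
    exact ⟨fun p hp => absurd hp (by simp), fun h => absurd rfl h, rfl⟩

lemma AT_card {k r : ℕ} (h1 : r * (r - 1) / 2 < k) (h2 : k ≤ r * (r + 1) / 2) :
    {l : List ℕ | AlmostTriangular k l}.ncard = r.choose (k - r * (r - 1) / 2) := by
  set m := k - r * (r - 1) / 2 with hm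
  set g : Finset (Fin r) → List ℕ :=
    fun s => List.ofFn (fun p : Fin r => p.val + if p ∈ s then 1 else 0) with hg
  have glen : ∀ s, (g s).length = r := fun s => List.length_ofFn
  have g_getD : ∀ s (p : Fin r), (g s).getD p.val 0 = p.val + if p ∈ s then 1 else 0 := by
    intro s p
    rw [List.getD_eq_getElem _ _ (by rw [glen]; exact p.isLt)]
    simp [hg]
  have hkpos : 0 < k := by omega
  have hset : {l : List ℕ | AlmostTriangular k l}
      = ↑((Finset.powersetCard m (Finset.univ : Finset (Fin r))).image g) := by
    ext l
    simp only [Set.mem_setOf_eq, Finset.coe_image, Set.mem_image, Finset.mem_coe,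
      Finset.mem_powersetCard_univ]
    constructor
    · intro hAT
      have hne : l ≠ [] := by
        intro he
        rw [he] at hAT
        have := hAT.2.2
        simp at this
        omega
      obtain ⟨hb1, hb2⟩ := AT_length_bounds hAT hne
      have hlr : l.length = r := r_unique hb1 hb2 h1 h2
      obtain ⟨hksum, _⟩ := AT_sum_card hAT
      refine ⟨Finset.univ.filter (fun p : Fin r => l.getD p.val 0 = p.val + 1), ?_, ?_⟩
      · have hksum' : k = r * (r - 1) / 2
            + (Finset.univ.filter (fun p : Fin r => l.getD p.val 0 = p.val + 1)).card := by
          subst hlr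
          exact hksum
        omega
      · apply List.ext_getElem (by rw [glen]; omega)
        intro p hp1 hp2
        have hpr : p < r := by rw [glen] at hp1; exact hp1
        have hh := g_getD (Finset.univ.filter
          (fun q : Fin r => l.getD q.val 0 = q.val + 1)) ⟨p, hpr⟩
        rw [List.getD_eq_getElem _ _ hp1] at hh
        rw [hh, ← List.getD_eq_getElem l 0 hp2]
        have hmem : ((⟨p, hpr⟩ : Fin r) ∈ Finset.univ.filter
            (fun q : Fin r => l.getD q.val 0 = q.val + 1)) ↔ l.getD p 0 = p + 1 := by
          rw [Finset.mem_filter]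
          exact ⟨fun h => h.2, fun h => ⟨Finset.mem_univ _, h⟩⟩
        rcases hAT.1 p (by omega) with hcase | hcase
        · rw [if_neg (by rw [hmem, hcase]; omega), hcase]
          simp
        · rw [if_pos (hmem.mpr hcase), hcase]
    · rintro ⟨s, hcard, rfl⟩
      have hmpos : 1 ≤ m := by omega
      refine ⟨?_, ?_, ?_⟩
      · intro p hp
        rw [glen] at hp
        rw [g_getD s ⟨p, hp⟩]
        by_cases hmem : (⟨p, hp⟩ : Fin r) ∈ s
        · rw [if_pos hmem]; right; simp
        · rw [if_neg hmem]; left; simp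
      · intro _
        obtain ⟨q, hq⟩ := Finset.card_pos.mp (by omega : 0 < s.card)
        refine ⟨q.val, by rw [glen]; exact q.isLt, ?_⟩
        have := g_getD s q
        rw [this, if_pos hq]
      · show (g s).sum = k
        simp only [hg, List.sum_ofFn]
        rw [Finset.sum_add_distrib, gauss_fin, sum_ite_mem_card, hcard]
        omega
  rw [hset, Set.ncard_coe_finset]
  have ginj : Function.Injective g := by
    intro s s' he
    ext p
    have h1 := g_getD s p
    have h2 := g_getD s' p
    rw [he] at h1
    rw [h1] at h2
    by_cases hs : p ∈ s <;> by_cases hs' : p ∈ s' <;> simp [hs, hs'] at h2 ⊢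
  rw [Finset.card_image_of_injective _ ginj, Finset.card_powersetCard, Finset.card_univ,
    Fintype.card_fin]

/-! ### the permutation-to-list bijection -/

def toList {n : ℕ} (π : Perm (Fin n)) : List ℕ :=
  List.ofFn (fun p : Fin (n-1) => invTable π ⟨n - 2 - p.val, by have := p.isLt; omega⟩)

lemma toList_length {n : ℕ} (π : Perm (Fin n)) : (toList π).length = n - 1 :=
  List.length_ofFn

lemma toList_getD {n : ℕ} (π : Perm (Fin n)) (p : ℕ) (hp : p < n - 1)
    (i : Fin n) (hi : i.val = n - 2 - p) : (toList π).getD p 0 = invTable π i := by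
  have h1 : p < (toList π).length := by rw [toList_length]; exact hp
  rw [List.getD_eq_getElem _ _ h1]
  have hieq : i = ⟨n - 2 - p, by have := i.isLt; omega⟩ := Fin.val_injective hi
  rw [hieq]
  have h2 : (toList π)[p] = invTable π ⟨n - 2 - p, by have := i.isLt; omega⟩ := by
    simp only [_root_.toList, List.getElem_ofFn]
  exact h2

lemma sum_toList {n : ℕ} (π : Perm (Fin n)) (hn : 1 ≤ n) :
    (toList π).sum = ∑ i, invTable π i := by
  obtain ⟨m, rfl⟩ : ∃ m, n = m + 1 := ⟨n - 1, by omega⟩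
  set g : ℕ → ℕ := fun q => if h : q < m + 1 then invTable π ⟨q, h⟩ else 0 with hgdef
  have hR : ∑ i, invTable π i = ∑ q ∈ Finset.range (m+1), g q := by
    rw [← Fin.sum_univ_eq_sum_range g (m+1)]
    apply Finset.sum_congr rfl
    intro i _
    rw [hgdef]
    simp only [i.isLt, dif_pos]
  have hL : (toList π).sum = ∑ q ∈ Finset.range m, g (m - 1 - q) := by
    rw [show _root_.toList π = List.ofFn (fun p : Fin (m+1-1) =>
      invTable π ⟨m + 1 - 2 - p.val, by have := p.isLt; omega⟩) from rfl, List.sum_ofFn]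
    have hm1 : m + 1 - 1 = m := rfl
    rw [← Fin.sum_univ_eq_sum_range (fun q => g (m - 1 - q)) m]
    apply Finset.sum_congr rfl ?_
    intro p hp
    have hplt : p.val < m := by
      have := p.isLt
      omega
    rw [hgdef]
    simp only [dif_pos (by omega : m - 1 - (p.val : ℕ) < m + 1)]
    rfl
  rw [hL, hR, Finset.sum_range_succ, Finset.sum_range_reflect g m]
  have hgm : g m = 0 := by
    rw [hgdef]
    simp only [dif_pos (by omega : m < m + 1)]
    exact invTable_last π ⟨m, by omega⟩ (by simp)
  omega

lemma toList_AT {n : ℕ} {k : ℕ} (π : Perm (Fin n))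
    (h : Indecomposable π ∧ inversions π = k ∧ Avoids123 π ∧ Avoids132 π) :
    AlmostTriangular k (toList π) := by
  obtain ⟨hind, hk, h123, h132⟩ := h
  have hav := (avoids_iff π).1 ⟨h123, h132⟩
  have hn1 : 1 ≤ n := hind.1
  refine ⟨?_, ?_, ?_⟩
  · intro p hp
    rw [toList_length] at hp
    have hq : n - 2 - p < n := by omega
    rw [toList_getD π p hp ⟨n - 2 - p, hq⟩ rfl]
    have h1 := invTable_le π ⟨n - 2 - p, hq⟩
    have h2 := hav ⟨n - 2 - p, hq⟩
    have hv : ((⟨n - 2 - p, hq⟩ : Fin n) : ℕ) = n - 2 - p := rfl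
    rw [hv] at h1 h2
    omega
  · intro hne
    have hn2 : 2 ≤ n := by
      by_contra hc
      apply hne
      have : n = 1 := by omega
      subst this
      rw [← List.length_eq_zero_iff, toList_length]
    have hdec := hind.2
    rw [decomp_iff π hn2 hav] at hdec
    push_neg at hdec
    obtain ⟨i, hi1, hi2⟩ := hdec
    refine ⟨n - 2 - i.val, by rw [toList_length]; omega, ?_⟩
    rw [toList_getD π (n - 2 - i.val) (by omega) i (by omega)]
    have h1 := invTable_le π i
    have := i.isLt
    omega
  · rw [sum_toList π hn1, ← inversions_eq_sum, hk]

lemma of_AT {k : ℕ} (l : List ℕ) (hAT : AlmostTriangular k l) :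
    ∃ (n : ℕ) (π : Perm (Fin n)),
      (Indecomposable π ∧ inversions π = k ∧ Avoids123 π ∧ Avoids132 π) ∧ toList π = l := by
  obtain ⟨hent, hbump, hsum⟩ := hAT
  set L := l.length with hL
  set n := L + 1 with hn
  have hc : ∀ i : Fin n, i.val < L → l.getD (L - 1 - i.val) 0 < n - i.val := by
    intro i hi
    have := hent (L - 1 - i.val) (by omega)
    omega
  set c : ∀ i : Fin n, Fin (n - i.val) := fun i =>
    if h : i.val < L then ⟨l.getD (L - 1 - i.val) 0, hc i h⟩
    else ⟨0, by have := i.isLt; omega⟩ with hcdef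
  obtain ⟨π, hπ⟩ := invTable_surjective c
  have hval : ∀ (v : ℕ) (hv : v < n), v < L → invTable π ⟨v, hv⟩ = l.getD (L - 1 - v) 0 := by
    intro v hv hvL
    rw [hπ ⟨v, hv⟩]
    have hcc : c ⟨v, hv⟩ = ⟨l.getD (L - 1 - v) 0, hc ⟨v, hv⟩ hvL⟩ := by
      simp only [hcdef]
      exact dif_pos hvL
    rw [hcc]
  have hval2 : ∀ (v : ℕ) (hv : v < n), ¬ (v < L) → invTable π ⟨v, hv⟩ = 0 := by
    intro v hv hvL
    rw [hπ ⟨v, hv⟩]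
    have hcc : c ⟨v, hv⟩ = ⟨0, by omega⟩ := by
      simp only [hcdef]
      exact dif_neg hvL
    rw [hcc]
  have hav : ∀ i : Fin n, n ≤ invTable π i + i.val + 2 := by
    intro i
    by_cases hi : i.val < L
    · have h3 := hval i.val i.isLt hi
      rw [Fin.eta] at h3
      have := hent (L - 1 - i.val) (by omega)
      omega
    · have h3 := hval2 i.val i.isLt hi
      rw [Fin.eta] at h3
      have := i.isLt
      omega
  have havp := (avoids_iff π).2 hav
  have htl : toList π = l := by
    apply List.ext_getElem (by rw [toList_length]; omega)
    intro p hp1 hp2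
    have hpL : p < L := hp2
    have key : (toList π).getD p 0 = l.getD p 0 := by
      have hq : L - 1 - p < n := by omega
      rw [toList_getD π p (by omega) ⟨L - 1 - p, hq⟩ (by show L - 1 - p = n - 2 - p; omega)]
      rw [hval (L - 1 - p) hq (by omega)]
      congr 1
      omega
    rwa [List.getD_eq_getElem _ _ hp1, List.getD_eq_getElem _ _ hp2] at key
  have hind : Indecomposable π := by
    refine ⟨by omega, ?_⟩
    intro hdec
    by_cases hL0 : L = 0
    · obtain ⟨j, hj1, hj2, -⟩ := hdec
      omega
    · have hne : l ≠ [] := by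
        intro he
        rw [he] at hL
        simp at hL
        omega
      obtain ⟨p, hp, hpe⟩ := hbump hne
      have hn2 : 2 ≤ n := by omega
      have hq : L - 1 - p < n := by omega
      have hd := (decomp_iff π hn2 hav).1 hdec ⟨L - 1 - p, hq⟩
        (by show L - 1 - p + 1 < n; omega)
      have hvv : ((⟨L - 1 - p, hq⟩ : Fin n) : ℕ) = L - 1 - p := rfl
      rw [hvv] at hd
      have hiv := hval (L - 1 - p) hq (by omega)
      have hii : L - 1 - (L - 1 - p) = p := by omega
      rw [hii, hpe] at hiv
      rw [hiv] at hd
      omega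
  have hk : inversions π = k := by
    rw [inversions_eq_sum, ← sum_toList π (by omega), htl, hsum]
  exact ⟨n, π, ⟨hind, hk, havp.1, havp.2⟩, htl⟩

lemma toList_inj {n n' : ℕ} (π : Perm (Fin n)) (π' : Perm (Fin n'))
    (hn : 1 ≤ n) (hn' : 1 ≤ n') (he : toList π = toList π') :
    (⟨n, π⟩ : Σ m, Perm (Fin m)) = ⟨n', π'⟩ := by
  have hlen := congrArg List.length he
  rw [toList_length, toList_length] at hlen
  have hnn : n = n' := by omega
  subst hnn
  suffices hs : π = π' by rw [hs]
  apply invTable_injective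
  intro i
  rcases Nat.lt_or_ge i.val (n-1) with h | h
  · have hn2 : 2 ≤ n := by omega
    have hp := congrArg (fun t : List ℕ => t.getD (n - 2 - i.val) 0) he
    rwa [toList_getD π _ (by have := i.isLt; omega) i (by have := i.isLt; omega),
      toList_getD π' _ (by have := i.isLt; omega) i (by have := i.isLt; omega)] at hp
  · rw [invTable_last π i (by have := i.isLt; omega),
      invTable_last π' i (by have := i.isLt; omega)]

lemma main_card (k : ℕ) :
    I123132 k = {l : List ℕ | AlmostTriangular k l}.ncard := by
  rw [I123132, ← Nat.card_coe_set_eq]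
  apply Nat.card_congr
  refine Equiv.ofBijective
    (fun q => ⟨toList q.1.2, toList_AT q.1.2 q.2⟩) ⟨?_, ?_⟩
  · rintro ⟨⟨n, π⟩, h⟩ ⟨⟨n', π'⟩, h'⟩ he
    have he' : toList π = toList π' := congrArg Subtype.val he
    exact Subtype.ext (toList_inj π π' h.1.1 h'.1.1 he')
  · rintro ⟨l, hAT⟩
    obtain ⟨n, π, hprop, htl⟩ := of_AT l hAT
    exact ⟨⟨⟨n, π⟩, hprop⟩, Subtype.ext htl⟩


/-- `|I_k(132,123)|` equals the number of almost triangular partitions of `k`,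
which is `C(r, k - r(r-1)/2)` where `r(r-1)/2 < k ≤ r(r+1)/2`, and is `1` for
`k = 0`. -/
theorem card_indecomposable_avoids123_avoids132 :
    (∀ k : ℕ, I123132 k = {l : List ℕ | AlmostTriangular k l}.ncard) ∧
    I123132 0 = 1 ∧
    (∀ k r : ℕ, r * (r - 1) / 2 < k → k ≤ r * (r + 1) / 2 →
      I123132 k = r.choose (k - r * (r - 1) / 2)) := by
  refine ⟨main_card, ?_, ?_⟩
  · rw [main_card 0, AT_zero, Set.ncard_singleton]
  · intro k r h1 h2
    rw [main_card k, AT_card h1 h2]
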